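/- Let ω_x > 0 and ω_y > 0 be reals such that ω_x/ω_y is irrational, let a > 0, b > 0, and φ₁, φ₂ ∈ ℝ. Then for every ε > 0 there exists t ≥ 0 such that |a·sin(ω_x·t + φ₁)| < ε and |b·sin(ω_y·t + φ₂)| < ε; i.e., the planar curve t ↦ (a·sin(ω_x·t + φ₁), b·sin(ω_y·t + φ₂)) comes arbitrarily close to the origin. -/

import Mathlib

open Real

/-- Small positive step: natural multiples of `θ` shifted by `c` come within `δ`
of an integer, with index as large as we like. -/
lemma step_lemma_pos (θ c δ : ℝ) (hδ : 0 < δ) (hθ : 0 < θ) (hθδ : θ < δ) (N : ℕ) :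
    ∃ j : ℕ, N ≤ j ∧ ∃ m : ℤ, |j * θ + c - m| < δ := by
  set M : ℤ := ⌈(N : ℝ) * θ + c⌉ with hM
  set x : ℝ := ((M : ℝ) - c) / θ with hx
  have hNx : (N : ℝ) ≤ x := by
    rw [hx, le_div_iff₀ hθ]
    have := Int.le_ceil ((N : ℝ) * θ + c)
    linarith
  have hceil_nonneg : (0 : ℤ) ≤ ⌈x⌉ := by
    have : (0 : ℝ) ≤ x := le_trans (by positivity) hNx
    exact_mod_cast Int.ceil_nonneg this
  refine ⟨⌈x⌉.toNat, ?_, M, ?_⟩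
  · have h1 : (N : ℝ) ≤ (⌈x⌉ : ℝ) := le_trans hNx (Int.le_ceil x)
    have h2 : (N : ℤ) ≤ ⌈x⌉ := by exact_mod_cast h1
    omega
  · have hj : ((⌈x⌉.toNat : ℕ) : ℝ) = (⌈x⌉ : ℝ) := by
      exact_mod_cast congrArg (Int.cast : ℤ → ℝ) (Int.toNat_of_nonneg hceil_nonneg)
    have hge : x ≤ ((⌈x⌉.toNat : ℕ) : ℝ) := by rw [hj]; exact Int.le_ceil x
    have hlt : ((⌈x⌉.toNat : ℕ) : ℝ) < x + 1 := by rw [hj]; exact Int.ceil_lt_add_one x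
    have h1 : (M : ℝ) - c ≤ (⌈x⌉.toNat : ℕ) * θ := by
      have := mul_le_mul_of_nonneg_right hge hθ.le
      rw [hx, div_mul_cancel₀ _ hθ.ne'] at this
      linarith
    have h2 : ((⌈x⌉.toNat : ℕ) : ℝ) * θ < (M : ℝ) - c + θ := by
      have := mul_lt_mul_of_pos_right hlt hθ
      rw [add_mul, one_mul, hx, div_mul_cancel₀ _ hθ.ne'] at this
      linarith
    rw [abs_of_nonneg (by linarith)]
    linarith

/-- As above but for any nonzero `θ` with `|θ| < δ`. -/
lemma step_lemma (θ c δ : ℝ) (hδ : 0 < δ) (hθ : θ ≠ 0) (hθδ : |θ| < δ) (N : ℕ) :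
    ∃ j : ℕ, N ≤ j ∧ ∃ m : ℤ, |j * θ + c - m| < δ := by
  rcases hθ.lt_or_gt with h | h
  · obtain ⟨j, hj, m, hm⟩ := step_lemma_pos (-θ) (-c) δ hδ (by linarith)
      (by rwa [abs_of_neg h] at hθδ) N
    refine ⟨j, hj, -m, ?_⟩
    have : (j : ℝ) * θ + c - (-m : ℤ) = -((j : ℝ) * (-θ) + (-c) - m) := by
      push_cast; ring
    rw [this, abs_neg]; exact hm
  · exact step_lemma_pos θ c δ hδ h (by rwa [abs_of_pos h] at hθδ) N

/-- If the oscillation frequencies `ω_x, ω_y` are incommensurate (their ratio is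
irrational), then the curve `t ↦ (a·sin(ω_x t + φ₁), b·sin(ω_y t + φ₂))` comes
arbitrarily close to the origin. -/
theorem incommensurate_close_approach (ωx ωy a b φ₁ φ₂ : ℝ)
    (hωx : 0 < ωx) (hωy : 0 < ωy) (hirr : Irrational (ωx / ωy))
    (ha : 0 < a) (hb : 0 < b) :
    ∀ ε > 0, ∃ t : ℝ, 0 ≤ t ∧
      |a * Real.sin (ωx * t + φ₁)| < ε ∧ |b * Real.sin (ωy * t + φ₂)| < ε := by
  intro ε hε
  -- the irrational ratio
  set α : ℝ := ωy / ωx with hα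
  have hαirr : Irrational α := by
    have : α = (ωx / ωy)⁻¹ := by
      rw [hα, inv_div]
    rw [this]
    exact hirr.inv
  have hπ : (0 : ℝ) < π := Real.pi_pos
  set δ : ℝ := ε / (b * π) with hδdef
  have hδ : 0 < δ := by positivity
  -- choose N₀ with N₀ * π ≥ φ₁
  obtain ⟨N₀, hN₀⟩ := exists_nat_ge (φ₁ / π)
  have hN₀' : φ₁ ≤ (N₀ : ℝ) * π := by
    rw [div_le_iff₀ hπ] at hN₀; linarith
  -- Dirichlet: find k with k*α close to an integer
  obtain ⟨n, hn⟩ := exists_nat_one_div_lt hδ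
  have hnpos : 0 < n + 1 := Nat.succ_pos n
  obtain ⟨k, hk0, _, hkle⟩ := Real.exists_nat_abs_mul_sub_round_le α hnpos
  set θ : ℝ := (k : ℝ) * α - round ((k : ℝ) * α) with hθdef
  have hθδ : |θ| < δ := by
    refine lt_of_le_of_lt (hkle.trans ?_) hn
    apply one_div_le_one_div_of_le
    · positivity
    · push_cast; linarith
  have hθne : θ ≠ 0 := by
    intro h
    have hkα : Irrational ((k : ℝ) * α) := hαirr.natCast_mul hk0.ne'
    have : (k : ℝ) * α = (round ((k : ℝ) * α) : ℤ) := by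
      have := sub_eq_zero.mp h; exact_mod_cast this
    exact hkα.ne_int _ this
  set c : ℝ := (φ₂ - α * φ₁) / π with hc
  obtain ⟨j, hjN, m, hm⟩ := step_lemma θ c δ hδ hθne hθδ N₀
  -- the total multiple and the time
  set K : ℕ := j * k with hK
  have hKN : (N₀ : ℝ) ≤ (K : ℝ) := by
    have : N₀ ≤ K := le_trans hjN (Nat.le_mul_of_pos_right j hk0)
    exact_mod_cast this
  set t : ℝ := ((K : ℝ) * π - φ₁) / ωx with ht
  have ht0 : 0 ≤ t := by
    apply div_nonneg _ hωx.le
    have : (N₀ : ℝ) * π ≤ (K : ℝ) * π := mul_le_mul_of_nonneg_right hKN hπ.le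
    linarith
  refine ⟨t, ht0, ?_, ?_⟩
  · -- first coordinate exactly zero
    have : ωx * t + φ₁ = (K : ℝ) * π := by
      rw [ht, mul_div_cancel₀ _ hωx.ne']; ring
    rw [this, Real.sin_nat_mul_pi]
    simpa using hε
  · -- second coordinate
    set m' : ℤ := m + (j : ℤ) * round ((k : ℝ) * α) with hm'
    have harg : ωy * t + φ₂ = ((j : ℝ) * θ + c - m) * π + (m' : ℝ) * π := by
      rw [ht]
      have : ωy * (((K : ℝ) * π - φ₁) / ωx) = α * ((K : ℝ) * π - φ₁) := by
        rw [hα]; field_simp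
      rw [this, hθdef, hc, hm', hK]
      push_cast
      field_simp
      ring
    have hsin : |Real.sin (ωy * t + φ₂)| ≤ |(j : ℝ) * θ + c - m| * π := by
      have habs1 : |((-1 : ℝ)) ^ m'| = 1 := by
        rcases Int.even_or_odd m' with h | h
        · rw [h.neg_one_zpow, abs_one]
        · rw [h.neg_one_zpow, abs_neg, abs_one]
      rw [harg, Real.sin_add_int_mul_pi, abs_mul, habs1, one_mul]
      calc |Real.sin (((j : ℝ) * θ + c - m) * π)| ≤ |((j : ℝ) * θ + c - m) * π| :=
            Real.abs_sin_le_abs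
        _ = |(j : ℝ) * θ + c - m| * π := by rw [abs_mul, abs_of_pos hπ]
    have : |b * Real.sin (ωy * t + φ₂)| = b * |Real.sin (ωy * t + φ₂)| := by
      rw [abs_mul, abs_of_pos hb]
    rw [this]
    have hlt : |(j : ℝ) * θ + c - m| * π < δ * π := by
      exact mul_lt_mul_of_pos_right hm hπ
    have : b * (|(j : ℝ) * θ + c - m| * π) < b * (δ * π) :=
      mul_lt_mul_of_pos_left hlt hb
    have hfin : b * (δ * π) = ε := by
      rw [hδdef]; field_simp
    calc b * |Real.sin (ωy * t + φ₂)| ≤ b * (|(j : ℝ) * θ + c - m| * π) :=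
          mul_le_mul_of_nonneg_left hsin hb.le
      _ < b * (δ * π) := ‹_›
      _ = ε := hfin
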